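/- The state ψ' = Σ_{i=1}^{k} cᵢ eᵢ ⊗ |underline(2^{k-i})⟩ with all cᵢ ≠ 0 and k ≥ 2 admits no nontrivial tensor factorization: for any bipartition of the k+1 subsystems (qudit and k qubits) into two nonempty groups, ψ' is not a product vector across that bipartition. -/
import Mathlib


open scoped BigOperators

/-- The state `ψ' = ∑ i, c i • (e_i ⊗ |2^{k-i}⟩)` in `ℂ^d ⊗ (ℂ²)^{⊗k}`, written as a
coefficient function on the product basis `Fin d × (Fin k → Fin 2)`; here
`|2^{k-i}⟩` is the `k`-qubit computational basis state with a `1` in position `i`. -/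
noncomputable def psiW (d k : ℕ) (hkd : k ≤ d) (c : Fin k → ℂ) :
    Fin d × (Fin k → Fin 2) → ℂ := fun p =>
  ∑ i : Fin k,
    if p.1 = Fin.castLE hkd i ∧ p.2 = (fun t => if t = i then (1 : Fin 2) else 0) then c i
    else 0

lemma psiW_apply_ind (d k : ℕ) (hkd : k ≤ d) (c : Fin k → ℂ) (i : Fin k) :
    psiW d k hkd c (Fin.castLE hkd i, fun t => if t = i then (1 : Fin 2) else 0) = c i := by
  unfold psiW
  rw [Finset.sum_eq_single i]
  · simp
  · intro b _ hb
    rw [if_neg]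
    rintro ⟨h1, -⟩
    exact hb (by simpa using (Fin.castLE_injective hkd h1.symm))
  · simp

lemma psiW_apply_zero (d k : ℕ) (hkd : k ≤ d) (c : Fin k → ℂ) (j : Fin d)
    (f : Fin k → Fin 2)
    (h : ∀ i : Fin k, ¬ (j = Fin.castLE hkd i ∧ f = fun t => if t = i then (1 : Fin 2) else 0)) :
    psiW d k hkd c (j, f) = 0 := by
  unfold psiW
  exact Finset.sum_eq_zero fun i _ => if_neg (h i)

/-- `ψ'` admits no nontrivial tensor factorization: for every bipartition of the `k+1`
subsystems into the group consisting of the qudit together with the qubits in `T`,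
and the (nonempty, i.e. `T ≠ univ`) group of remaining qubits, `ψ'` is not a product
vector across that bipartition.  (Since the qudit lies on one of the two sides, every
bipartition of the `k+1` subsystems is of this form up to swapping the sides.) -/
theorem stmt_8 (d k : ℕ) (hk : 2 ≤ k) (hkd : k ≤ d)
    (c : Fin k → ℂ) (hc : ∀ i, c i ≠ 0) (hnorm : ∑ i, ‖c i‖ ^ 2 = 1)
    (T : Finset (Fin k)) (hT : T ≠ Finset.univ) :
    ¬ ∃ (vA : Fin d × ({x : Fin k // x ∈ T} → Fin 2) → ℂ)
        (vB : ({x : Fin k // x ∉ T} → Fin 2) → ℂ),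
        ∀ (j : Fin d) (f : Fin k → Fin 2),
          psiW d k hkd c (j, f) =
            vA (j, fun t => f t.1) * vB (fun t => f t.1) := by
  rintro ⟨vA, vB, h⟩
  -- indicator function
  set ind : Fin k → (Fin k → Fin 2) := fun i t => if t = i then (1 : Fin 2) else 0 with hind
  -- pick i₀ ∉ T
  obtain ⟨i₀, hi₀⟩ : ∃ i, i ∉ T := by
    by_contra hcon
    push_neg at hcon
    exact hT (Finset.eq_univ_iff_forall.mpr hcon)
  have key : ∀ i : Fin k, c i =
      vA (Fin.castLE hkd i, fun t => ind i t.1) * vB (fun t => ind i t.1) := by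
    intro i
    have := h (Fin.castLE hkd i) (ind i)
    rwa [psiW_apply_ind] at this
  by_cases hTe : T.Nonempty
  · -- pick i₁ ∈ T, use crossed vector with 1s at i₀ and i₁
    obtain ⟨i₁, hi₁⟩ := hTe
    have hne : i₀ ≠ i₁ := fun he => hi₀ (he ▸ hi₁)
    set g : Fin k → Fin 2 := fun t => if t = i₀ ∨ t = i₁ then 1 else 0 with hg
    have hz : psiW d k hkd c (Fin.castLE hkd i₁, g) = 0 := by
      apply psiW_apply_zero
      rintro i ⟨h1, h2⟩
      have hii : i = i₁ := by simpa using (Fin.castLE_injective hkd h1.symm)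
      subst hii
      have := congrFun h2 i₀
      simp [hg, hind, hne] at this
    have hcross := h (Fin.castLE hkd i₁) g
    rw [hz] at hcross
    have hgT : (fun t : {x : Fin k // x ∈ T} => g t.1) = fun t => ind i₁ t.1 := by
      funext t
      have : t.1 ≠ i₀ := fun he => hi₀ (he ▸ t.2)
      simp [hg, hind, this]
    have hgTc : (fun t : {x : Fin k // x ∉ T} => g t.1) = fun t => ind i₀ t.1 := by
      funext t
      have : t.1 ≠ i₁ := fun he => t.2 (he ▸ hi₁)
      simp [hg, hind, this]
    rw [hgT, hgTc] at hcross
    have h0 := key i₀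
    have h1 := key i₁
    rcases mul_eq_zero.mp hcross.symm with hx | hx
    · exact hc i₁ (by rw [h1, hx, zero_mul])
    · exact hc i₀ (by rw [h0, hx, mul_zero])
  · -- T empty: pick i₁ ≠ i₀ (both outside T)
    rw [Finset.not_nonempty_iff_eq_empty] at hTe
    subst hTe
    haveI : Nontrivial (Fin k) := Fin.nontrivial_iff_two_le.mpr hk
    obtain ⟨i₁, hne⟩ := exists_ne i₀
    have hz : psiW d k hkd c (Fin.castLE hkd i₀, ind i₁) = 0 := by
      apply psiW_apply_zero
      rintro i ⟨h1, h2⟩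
      have hii : i = i₀ := by simpa using (Fin.castLE_injective hkd h1.symm)
      subst hii
      have := congrFun h2 i₁
      simp [hind, hne] at this
    have hcross := h (Fin.castLE hkd i₀) (ind i₁)
    rw [hz] at hcross
    have hT1 : (fun t : {x : Fin k // x ∈ (∅ : Finset (Fin k))} => ind i₁ t.1) =
        fun t => ind i₀ t.1 := by
      funext t
      exact absurd t.2 (Finset.notMem_empty t.1)
    rw [hT1] at hcross
    have h0 := key i₀
    have h1 := key i₁
    rcases mul_eq_zero.mp hcross.symm with hx | hx
    · exact hc i₀ (by rw [h0, hx, zero_mul])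
    · exact hc i₁ (by rw [h1, hx, mul_zero])
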